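/- Let H be a finite edge-weighted graph (symmetric real matrix with nonnegative entries) whose eigenvalues μ_1 ≥ μ_2 ≥ ... ≥ μ_n satisfy μ_i ≤ 0 for all i ≥ 2 (antiferromagnetic). Then for every cycle C_ℓ of length ℓ ≥ 3, hom(C_ℓ, H) = ∑_i μ_i^ℓ ≥ (∑_i μ_i³)^{ℓ/3} = hom(K_3, H)^{ℓ/3}. -/

import Mathlib

open Matrix Finset

lemma trace_pow_eq_sum_eigenvalues_pow (n : ℕ) (H : Matrix (Fin n) (Fin n) ℝ)
    (hH : H.IsHermitian) (k : ℕ) :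
    (H ^ k).trace = ∑ i, hH.eigenvalues i ^ k := by
  set U : Matrix (Fin n) (Fin n) ℝ := (hH.eigenvectorUnitary : Matrix (Fin n) (Fin n) ℝ) with hU
  have hUU : U * star U = 1 := Matrix.mem_unitaryGroup_iff.mp hH.eigenvectorUnitary.2
  have hUU' : star U * U = 1 := Matrix.mem_unitaryGroup_iff'.mp hH.eigenvectorUnitary.2
  set D : Matrix (Fin n) (Fin n) ℝ := Matrix.diagonal (RCLike.ofReal ∘ hH.eigenvalues) with hD
  have key : ∀ m : ℕ, H ^ m = U * D ^ m * star U := by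
    intro m
    induction m with
    | zero => simp [hUU]
    | succ m ih =>
        have hspec : H = U * D * star U := hH.spectral_theorem
        rw [pow_succ, ih]
        conv_lhs => rw [hspec]
        rw [pow_succ]
        simp only [Matrix.mul_assoc]
        rw [← Matrix.mul_assoc (star U) U, hUU', Matrix.one_mul]
  rw [key k, Matrix.trace_mul_comm, ← Matrix.mul_assoc, hUU', Matrix.one_mul,
    Matrix.diagonal_pow, Matrix.trace_diagonal]
  simp

theorem stmt_18 (n : ℕ) (H : Matrix (Fin n) (Fin n) ℝ) (hH : H.IsHermitian)
    (hnonneg : ∀ i j, 0 ≤ H i j)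
    (hanti : ∃ i₀ : Fin n, ∀ i : Fin n, i ≠ i₀ → hH.eigenvalues i ≤ 0)
    (ℓ : ℕ) (hℓ : 3 ≤ ℓ) :
    (H ^ ℓ).trace = ∑ i, hH.eigenvalues i ^ ℓ
    ∧ ∑ i, hH.eigenvalues i ^ ℓ ≥ (∑ i, hH.eigenvalues i ^ 3) ^ ((ℓ : ℝ) / 3) := by
  obtain ⟨i₀, hi₀⟩ := hanti
  set μ : Fin n → ℝ := hH.eigenvalues with hμ
  refine ⟨trace_pow_eq_sum_eigenvalues_pow n H hH ℓ, ?_⟩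
  -- trace H = ∑ μ ≥ 0
  have htr : (0:ℝ) ≤ ∑ i, μ i := by
    have h1 := trace_pow_eq_sum_eigenvalues_pow n H hH 1
    simp only [pow_one] at h1
    rw [← h1, Matrix.trace]
    exact Finset.sum_nonneg fun i _ => hnonneg i i
  set a : ℝ := μ i₀ with ha
  have hsplit : ∀ k : ℕ, ∑ i, μ i ^ k = a ^ k + ∑ i ∈ univ.erase i₀, μ i ^ k := by
    intro k
    rw [← Finset.add_sum_erase _ _ (mem_univ i₀)]
  have hb : ∀ i ∈ univ.erase i₀, (0:ℝ) ≤ -μ i := by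
    intro i hi
    have := hi₀ i (Finset.mem_erase.mp hi).1
    linarith
  have hbsum : ∑ i ∈ univ.erase i₀, -μ i ≤ a := by
    have := hsplit 1
    simp only [pow_one] at this
    have h2 : ∑ i ∈ univ.erase i₀, -μ i = -∑ i ∈ univ.erase i₀, μ i := by
      rw [Finset.sum_neg_distrib]
    linarith
  have ha0 : (0:ℝ) ≤ a :=
    le_trans (Finset.sum_nonneg hb) hbsum
  have hble : ∀ i ∈ univ.erase i₀, -μ i ≤ a := fun i hi =>
    le_trans (Finset.single_le_sum hb hi) hbsum
  -- S3 := ∑ μ^3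
  set S3 : ℝ := ∑ i, μ i ^ 3 with hS3
  have hB3 : ∑ i ∈ univ.erase i₀, (-μ i) ^ 3 ≤ a ^ 3 := by
    calc ∑ i ∈ univ.erase i₀, (-μ i) ^ 3
        ≤ ∑ i ∈ univ.erase i₀, a ^ 2 * (-μ i) := by
          refine Finset.sum_le_sum fun i hi => ?_
          have h1 := hb i hi
          have h2 := hble i hi
          nlinarith [mul_le_mul_of_nonneg_left (mul_le_mul h2 h2 h1 ha0) h1]
      _ = a ^ 2 * ∑ i ∈ univ.erase i₀, -μ i := by rw [Finset.mul_sum]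
      _ ≤ a ^ 2 * a := by
          exact mul_le_mul_of_nonneg_left hbsum (by positivity)
      _ = a ^ 3 := by ring
  have hS3eq : S3 = a ^ 3 - ∑ i ∈ univ.erase i₀, (-μ i) ^ 3 := by
    rw [hS3, hsplit 3]
    have : ∑ i ∈ univ.erase i₀, (-μ i) ^ 3 = -∑ i ∈ univ.erase i₀, μ i ^ 3 := by
      rw [← Finset.sum_neg_distrib]
      exact Finset.sum_congr rfl fun i _ => by ring
    rw [this]; ring
  have hS3nonneg : (0:ℝ) ≤ S3 := by rw [hS3eq]; linarith
  have hS3le : S3 ≤ a ^ 3 := by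
    rw [hS3eq]
    have : (0:ℝ) ≤ ∑ i ∈ univ.erase i₀, (-μ i) ^ 3 :=
      Finset.sum_nonneg fun i hi => pow_nonneg (hb i hi) 3
    linarith
  -- main lower bound: ∑ μ^ℓ ≥ a^(ℓ-3) * S3
  have hmain : a ^ (ℓ - 3) * S3 ≤ ∑ i, μ i ^ ℓ := by
    have hstep : ∀ i ∈ univ.erase i₀, -(a ^ (ℓ - 3) * (-μ i) ^ 3) ≤ μ i ^ ℓ := by
      intro i hi
      have h1 : (-μ i) ^ ℓ ≤ a ^ (ℓ - 3) * (-μ i) ^ 3 := by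
        have : (-μ i) ^ ℓ = (-μ i) ^ (ℓ - 3) * (-μ i) ^ 3 := by
          rw [← pow_add]; congr 1; omega
        rw [this]
        exact mul_le_mul_of_nonneg_right
          (pow_le_pow_left₀ (hb i hi) (hble i hi) _) (pow_nonneg (hb i hi) 3)
      have h2 : -(-μ i) ^ ℓ ≤ μ i ^ ℓ := by
        have habs : (-μ i) ^ ℓ = |μ i ^ ℓ| := by
          rw [abs_pow, abs_eq_neg_self.mpr (by linarith [hb i hi] : μ i ≤ 0)]
        rw [habs]
        exact neg_abs_le _
      linarith
    have hpa : a ^ (ℓ - 3) * a ^ 3 = a ^ ℓ := by rw [← pow_add]; congr 1; omega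
    calc a ^ (ℓ - 3) * S3
        = a ^ ℓ - a ^ (ℓ - 3) * ∑ i ∈ univ.erase i₀, (-μ i) ^ 3 := by
          rw [hS3eq, mul_sub, hpa]
      _ = a ^ ℓ + ∑ i ∈ univ.erase i₀, -(a ^ (ℓ - 3) * (-μ i) ^ 3) := by
          rw [Finset.sum_neg_distrib, ← Finset.mul_sum]; ring
      _ ≤ a ^ ℓ + ∑ i ∈ univ.erase i₀, μ i ^ ℓ := by
          exact add_le_add_right (Finset.sum_le_sum hstep) _
      _ = ∑ i, μ i ^ ℓ := (hsplit ℓ).symm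
  -- rpow bound: S3 ^ (ℓ/3) ≤ a^(ℓ-3) * S3
  have hexp3 : (0:ℝ) ≤ ((ℓ : ℝ) - 3) / 3 := by
    have : (3:ℝ) ≤ ℓ := by exact_mod_cast hℓ
    linarith
  have hrpow : S3 ^ ((ℓ : ℝ) / 3) ≤ a ^ (ℓ - 3) * S3 := by
    rcases eq_or_lt_of_le hS3nonneg with h0 | hpos
    · rw [← h0, Real.zero_rpow (by positivity), mul_zero]
    · have e2 : S3 ^ (((ℓ:ℝ) - 3) / 3) ≤ a ^ (ℓ - 3) := by
        calc S3 ^ (((ℓ:ℝ) - 3) / 3)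
            ≤ (a ^ 3) ^ (((ℓ:ℝ) - 3) / 3) := Real.rpow_le_rpow hS3nonneg hS3le hexp3
          _ = a ^ ((ℓ:ℝ) - 3) := by
              rw [← Real.rpow_natCast a 3, ← Real.rpow_mul ha0]
              congr 1; push_cast; ring
          _ = a ^ (ℓ - 3 : ℕ) := by
              rw [← Real.rpow_natCast a (ℓ - 3), Nat.cast_sub hℓ]
              norm_num
      calc S3 ^ ((ℓ:ℝ) / 3)
          = S3 * S3 ^ (((ℓ:ℝ) - 3) / 3) := by
            rw [show (ℓ:ℝ) / 3 = 1 + ((ℓ:ℝ) - 3) / 3 by ring, Real.rpow_add hpos,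
              Real.rpow_one]
        _ ≤ S3 * a ^ (ℓ - 3) := mul_le_mul_of_nonneg_left e2 hS3nonneg
        _ = a ^ (ℓ - 3) * S3 := mul_comm _ _
  calc (∑ i, μ i ^ 3) ^ ((ℓ : ℝ) / 3) = S3 ^ ((ℓ : ℝ) / 3) := rfl
    _ ≤ a ^ (ℓ - 3) * S3 := hrpow
    _ ≤ ∑ i, μ i ^ ℓ := hmain
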